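/- Let $Y$ solve $Y'' + K Y = 0$ on $[0,\infty)$ with $|K(t)| \le L$ everywhere ($L>1$), and suppose moreover that $K(t) = 0$ outside a union of intervals $I_1, I_2, \ldots$ each of length at most $t_0$, with consecutive intervals separated by gaps of length at least $d$. Then for $0 < \epsilon < 1$, $\limsup_{t\to\infty}\frac{1}{2t}\log(\epsilon^2 Y(t)^2 + Y'(t)^2) \le \frac{L^2 t_0}{d\epsilon} + \frac{\epsilon}{2}$. In particular, if $d > 2L^2 t_0/\epsilon^2$, this limsup is strictly less than $\epsilon$. -/

import Mathlib

open Filter Real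

section Aux

/-- Forward Grönwall: `|f T| ≤ |f 0| e^{M T}` for `T ≥ 0` when `|f'| ≤ M |f|`. -/
private lemma gronwall_fwd {f f' : ℝ → ℝ} {M T : ℝ} (hT : 0 ≤ T)
    (hderiv : ∀ t, HasDerivAt f (f' t) t)
    (hbound : ∀ t, |f' t| ≤ M * |f t|) :
    |f T| ≤ |f 0| * Real.exp (M * T) := by
  have := norm_le_gronwallBound_of_norm_deriv_right_le (f := f) (f' := f')
    (δ := |f 0|) (K := M) (ε := 0) (a := 0) (b := T)
    (fun t _ => (hderiv t).continuousAt.continuousWithinAt)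
    (fun t _ => (hderiv t).hasDerivWithinAt)
    (le_refl _)
    (fun t _ => by simpa [Real.norm_eq_abs] using hbound t)
    T ⟨hT, le_refl T⟩
  simpa [Real.norm_eq_abs, gronwallBound_ε0] using this

/-- Backward Grönwall: `|f 0| ≤ |f T| e^{M T}` for `T ≥ 0` when `|f'| ≤ M |f|`. -/
private lemma gronwall_bwd {f f' : ℝ → ℝ} {M T : ℝ} (hT : 0 ≤ T)
    (hderiv : ∀ t, HasDerivAt f (f' t) t)
    (hbound : ∀ t, |f' t| ≤ M * |f t|) :
    |f 0| ≤ |f T| * Real.exp (M * T) := by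
  have hderiv' : ∀ s, HasDerivAt (fun s => f (T - s)) (-(f' (T - s))) s := by
    intro s
    have h1 : HasDerivAt (fun s : ℝ => T - s) (-1) s := by
      simpa using (hasDerivAt_id s).const_sub T
    exact ((hderiv (T - s)).comp s h1).congr_deriv (by ring)
  have := gronwall_fwd (f := fun s => f (T - s)) (f' := fun s => -(f' (T - s)))
    (M := M) (T := T) hT hderiv'
    (fun s => by simpa [abs_neg] using hbound (T - s))
  simpa using this

/-- limsup of `f` at top is at most `R` provided `f ≤ φ` eventually, `f` has an eventual
lower bound, and `φ → R`. -/
private lemma aux_limsup_le {f φ : ℝ → ℝ} {R l : ℝ}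
    (hev : ∀ᶠ T in atTop, f T ≤ φ T)
    (hlb : ∀ᶠ T in atTop, l ≤ f T)
    (hφ : Tendsto φ atTop (nhds R)) :
    limsup f atTop ≤ R := by
  have h1 : limsup f atTop ≤ limsup φ atTop :=
    limsup_le_limsup hev
      (Filter.IsBoundedUnder.isCoboundedUnder_le ⟨l, by
        simpa [Filter.eventually_map] using hlb⟩)
      hφ.isBoundedUnder_le
  simpa [hφ.limsup_eq] using h1

end Aux

set_option maxHeartbeats 1000000

/-- Quantitative Lyapunov exponent bound (core of Lemma 4.4): if `Y'' + K Y = 0` with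
`|K| ≤ L` (`L > 1`), and `K` vanishes outside a union of intervals `[b j, c j]` of length
at most `t₀` separated by gaps of length at least `d`, then for `0 < ε < 1` the
exponential growth rate of `ε² Y² + (Y')²` is at most `L² t₀ / (d ε) + ε / 2`; in
particular it is `< ε` whenever `d > 2 L² t₀ / ε²`. -/
theorem lyapunov_bound_oscillating (K Y Y' : ℝ → ℝ) (L t₀ d ε : ℝ)
    (hK : Continuous K) (hL : 1 < L) (hKL : ∀ t, |K t| ≤ L)
    (ht₀ : 0 < t₀) (hd : 0 < d) (hε : 0 < ε) (hε1 : ε < 1)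
    (b c : ℕ → ℝ)
    (hbc : ∀ j, b j ≤ c j)
    (hlen : ∀ j, c j - b j ≤ t₀)
    (hgap : ∀ j, c j + d ≤ b (j + 1))
    (hKzero : ∀ t, t ∉ (⋃ j : ℕ, Set.Icc (b j) (c j)) → K t = 0)
    (hY : ∀ t, HasDerivAt Y (Y' t) t)
    (hY' : ∀ t, HasDerivAt Y' (-(K t * Y t)) t) :
    limsup (fun t : ℝ =>
        Real.log (ε ^ 2 * Y t ^ 2 + Y' t ^ 2) / (2 * t)) atTop ≤
      L ^ 2 * t₀ / (d * ε) + ε / 2 ∧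
    (d > 2 * L ^ 2 * t₀ / ε ^ 2 →
      limsup (fun t : ℝ =>
        Real.log (ε ^ 2 * Y t ^ 2 + Y' t ^ 2) / (2 * t)) atTop < ε) := by
  set S : Set ℝ := ⋃ j : ℕ, Set.Icc (b j) (c j) with hS
  set y : ℝ → ℝ := fun t => ε ^ 2 * Y t ^ 2 + Y' t ^ 2 with hy
  set D : ℝ → ℝ := fun t => 2 * Y t * Y' t * (ε ^ 2 - K t) with hD
  set M : ℝ := 2 * L ^ 2 / ε with hM
  have hL0 : 0 < L := lt_trans one_pos hL
  have hMpos : 0 < M := by positivity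
  have hy_nonneg : ∀ t, 0 ≤ y t := fun t => by positivity
  have hy_deriv : ∀ t, HasDerivAt y (D t) t := by
    intro t
    have h1 := ((hY t).pow 2).const_mul (ε ^ 2)
    have h2 := (hY' t).pow 2
    refine (h1.add h2).congr_deriv ?_
    simp only [hD]; norm_num; ring
  have hYc : Continuous Y := by
    rw [continuous_iff_continuousAt]; exact fun t => (hY t).continuousAt
  have hY'c : Continuous Y' := by
    rw [continuous_iff_continuousAt]; exact fun t => (hY' t).continuousAt
  have hDc : Continuous D :=
    ((continuous_const.mul hYc).mul hY'c).mul (continuous_const.sub hK)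
  have hyc : Continuous y :=
    ((continuous_const.mul (hYc.pow 2))).add (hY'c.pow 2)
  -- elementary AM-GM fact
  have key : ∀ t, 2 * |Y t| * |Y' t| * ε ≤ y t := by
    intro t
    have h1 : (0:ℝ) ≤ (ε * |Y t| - |Y' t|) ^ 2 := sq_nonneg _
    have h2 : |Y t| ^ 2 = Y t ^ 2 := sq_abs _
    have h3 : |Y' t| ^ 2 = Y' t ^ 2 := sq_abs _
    simp only [hy]
    nlinarith
  -- global derivative bound
  have hglob : ∀ t, |D t| ≤ M * y t := by
    intro t
    have habs : |D t| = 2 * |Y t| * |Y' t| * |ε ^ 2 - K t| := by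
      simp only [hD, abs_mul, abs_two]
    have hKb : |ε ^ 2 - K t| ≤ 2 * L ^ 2 := by
      have := abs_le.1 (hKL t)
      have h2 : |ε ^ 2 - K t| ≤ ε ^ 2 + L := by
        rw [abs_sub_le_iff]; constructor <;> nlinarith [abs_le.1 (hKL t)]
      nlinarith
    have h2 : 2 * |Y t| * |Y' t| ≤ y t / ε := by
      rw [le_div_iff₀ hε]
      have := key t; linarith
    calc |D t| = 2 * |Y t| * |Y' t| * |ε ^ 2 - K t| := habs
      _ ≤ (y t / ε) * (2 * L ^ 2) := by
          apply mul_le_mul h2 hKb (abs_nonneg _)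
          positivity
      _ = M * y t := by rw [hM]; field_simp
  -- flat region bound
  have hflat : ∀ t, t ∉ S → |D t| ≤ ε * y t := by
    intro t ht
    have hKt : K t = 0 := hKzero t ht
    have habs : |D t| = 2 * |Y t| * |Y' t| * ε ^ 2 := by
      simp only [hD, hKt, sub_zero, abs_mul, abs_two, abs_of_nonneg (sq_nonneg (ε:ℝ))]
    have := key t
    calc |D t| = (2 * |Y t| * |Y' t| * ε) * ε := by rw [habs]; ring
      _ ≤ y t * ε := by
          apply mul_le_mul_of_nonneg_right (key t) hε.le
      _ = ε * y t := mul_comm _ _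
  -- the auxiliary positive function z and g = log z
  set z : ℝ → ℝ := fun t => y t + 1 with hz
  have hz_pos : ∀ t, 0 < z t := fun t => by
    have := hy_nonneg t; simp only [hz]; linarith
  have hz_ge : ∀ t, y t ≤ z t := fun t => by simp only [hz]; linarith
  set g : ℝ → ℝ := fun t => Real.log (z t) with hg
  have hg_deriv : ∀ t, HasDerivAt g (D t / z t) t := by
    intro t
    have h1 : HasDerivAt z (D t) t := (hy_deriv t).add_const 1
    have := (Real.hasDerivAt_log (ne_of_gt (hz_pos t))).comp t h1
    exact this.congr_deriv (by rw [div_eq_inv_mul])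
  have hzc : Continuous z := hyc.add continuous_const
  have hgdc : Continuous fun t => D t / z t :=
    hDc.div hzc fun t => ne_of_gt (hz_pos t)
  -- lower bound on b j
  have hb_lb : ∀ j : ℕ, b 0 + j * d ≤ b j := by
    intro j
    induction j with
    | zero => simp
    | succ n ih =>
      have h1 := hgap n
      have h2 := hbc n
      push_cast
      nlinarith
  -- log y ≤ g
  have hlogy : ∀ t, Real.log (y t) ≤ g t := by
    intro t
    rcases eq_or_lt_of_le (hy_nonneg t) with h | h
    · rw [← h, Real.log_zero]
      exact Real.log_nonneg (by have := hy_nonneg t; simp only [hg, hz]; linarith)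
    · exact Real.log_le_log h (hz_ge t)
  -- Main eventual estimate
  set R : ℝ := L ^ 2 * t₀ / (d * ε) + ε / 2 with hR
  set A : ℝ := (g 0 + M * t₀ - M * t₀ * (b 0) / d) / 2 with hA
  have keybound : ∀ T : ℝ, max (b 0) 1 ≤ T →
      Real.log (ε ^ 2 * Y T ^ 2 + Y' T ^ 2) / (2 * T) ≤ A * T⁻¹ + R := by
    intro T hT
    show Real.log (y T) / (2 * T) ≤ A * T⁻¹ + R
    have hT1 : (1:ℝ) ≤ T := le_trans (le_max_right _ _) hT
    have hTb : b 0 ≤ T := le_trans (le_max_left _ _) hT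
    have hT0 : (0:ℝ) < T := lt_of_lt_of_le one_pos hT1
    set N : ℕ := ⌊(T - b 0) / d⌋₊ with hN
    have hNle : (N : ℝ) ≤ (T - b 0) / d := Nat.floor_le (div_nonneg (by linarith) hd.le)
    have hNfl : ∀ j : ℕ, (j : ℝ) ≤ (T - b 0) / d → j ≤ N := fun j h => hN ▸ Nat.le_floor h
    clear_value N
    clear hN
    set F : ℝ → ℝ := fun s => ε + M * ∑ j ∈ Finset.range (N + 1),
      (Set.Icc (b j) (c j)).indicator (fun _ => (1:ℝ)) s with hF
    -- pointwise bound on [0, T]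
    have hpt : ∀ s ∈ Set.Icc (0:ℝ) T, D s / z s ≤ F s := by
      intro s hs
      have hsum_nonneg : 0 ≤ ∑ j ∈ Finset.range (N + 1),
          (Set.Icc (b j) (c j)).indicator (fun _ => (1:ℝ)) s :=
        Finset.sum_nonneg fun j _ => Set.indicator_nonneg (fun _ _ => zero_le_one) s
      by_cases hsS : s ∈ S
      · obtain ⟨j, hj⟩ : ∃ j, s ∈ Set.Icc (b j) (c j) := by
          simpa [hS, Set.mem_iUnion] using hsS
        have hjN : j ∈ Finset.range (N + 1) := by
          have h1 := hb_lb j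
          have h2 : b j ≤ s := hj.1
          have h3 : s ≤ T := hs.2
          have h4 : (j : ℝ) ≤ (T - b 0) / d := by
            rw [le_div_iff₀ hd]; nlinarith
          exact Finset.mem_range.2 (Nat.lt_succ_of_le (hNfl j h4))
        have hsum1 : (1:ℝ) ≤ ∑ j ∈ Finset.range (N + 1),
            (Set.Icc (b j) (c j)).indicator (fun _ => (1:ℝ)) s := by
          have := Finset.single_le_sum
            (f := fun j => (Set.Icc (b j) (c j)).indicator (fun _ => (1:ℝ)) s)
            (fun i _ => Set.indicator_nonneg (fun _ _ => zero_le_one) s) hjN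
          simpa [Set.indicator_of_mem hj] using this
        have hDz : D s / z s ≤ M := by
          rw [div_le_iff₀ (hz_pos s)]
          calc D s ≤ |D s| := le_abs_self _
            _ ≤ M * y s := hglob s
            _ ≤ M * z s := by
                apply mul_le_mul_of_nonneg_left (hz_ge s) hMpos.le
        calc D s / z s ≤ M := hDz
          _ ≤ ε + M * ∑ j ∈ Finset.range (N + 1),
              (Set.Icc (b j) (c j)).indicator (fun _ => (1:ℝ)) s := by nlinarith
          _ = F s := rfl
      · have hf := hflat s hsS
        have hDz : D s / z s ≤ ε := by
          rw [div_le_iff₀ (hz_pos s)]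
          calc D s ≤ |D s| := le_abs_self _
            _ ≤ ε * y s := hf
            _ ≤ ε * z s := mul_le_mul_of_nonneg_left (hz_ge s) hε.le
        calc D s / z s ≤ ε := hDz
          _ ≤ F s := by
              simp only [hF]
              nlinarith
    -- integrability
    have hindInt : ∀ j : ℕ, IntervalIntegrable
        ((Set.Icc (b j) (c j)).indicator fun _ => (1:ℝ)) MeasureTheory.volume 0 T := by
      intro j
      rw [intervalIntegrable_iff]
      refine MeasureTheory.Integrable.indicator ?_ measurableSet_Icc
      refine MeasureTheory.integrableOn_const ?_
      rw [Set.uIoc_of_le hT0.le]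
      exact measure_Ioc_lt_top.ne
    have hsumInt : IntervalIntegrable (fun s => ∑ j ∈ Finset.range (N + 1),
        (Set.Icc (b j) (c j)).indicator (fun _ => (1:ℝ)) s) MeasureTheory.volume 0 T := by
      rw [intervalIntegrable_iff]
      exact MeasureTheory.integrable_finset_sum _ fun j _ => (hindInt j).def'
    have hFint : IntervalIntegrable F MeasureTheory.volume 0 T :=
      intervalIntegrable_const.add (hsumInt.const_mul M)
    have hint1 : IntervalIntegrable (fun s => D s / z s) MeasureTheory.volume 0 T :=
      hgdc.intervalIntegrable _ _
    -- FTC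
    have hftc : g T - g 0 = ∫ s in (0:ℝ)..T, D s / z s :=
      (intervalIntegral.integral_eq_sub_of_hasDerivAt (fun s _ => hg_deriv s) hint1).symm
    have hmono : (∫ s in (0:ℝ)..T, D s / z s) ≤ ∫ s in (0:ℝ)..T, F s :=
      intervalIntegral.integral_mono_on hT0.le hint1 hFint hpt
    -- compute/bound the integral of F
    have hindval : ∀ j : ℕ, (∫ s in (0:ℝ)..T,
        (Set.Icc (b j) (c j)).indicator (fun _ => (1:ℝ)) s) ≤ t₀ := by
      intro j
      rw [intervalIntegral.integral_of_le hT0.le,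
        MeasureTheory.setIntegral_indicator measurableSet_Icc,
        MeasureTheory.setIntegral_const, smul_eq_mul, mul_one]
      refine ENNReal.toReal_le_of_le_ofReal ht₀.le ?_
      refine le_trans (MeasureTheory.measure_mono Set.inter_subset_right) ?_
      rw [Real.volume_Icc]
      exact ENNReal.ofReal_le_ofReal (hlen j)
    have hFval : (∫ s in (0:ℝ)..T, F s) ≤ ε * T + M * ((N + 1) * t₀) := by
      have heq : (∫ s in (0:ℝ)..T, F s) = ε * T + M * ∑ j ∈ Finset.range (N + 1),
          ∫ s in (0:ℝ)..T, (Set.Icc (b j) (c j)).indicator (fun _ => (1:ℝ)) s := by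
        simp only [hF]
        rw [intervalIntegral.integral_add intervalIntegrable_const (hsumInt.const_mul M),
          intervalIntegral.integral_const, intervalIntegral.integral_const_mul,
          intervalIntegral.integral_finset_sum (fun j _ => hindInt j)]
        simp [smul_eq_mul, mul_comm]
      rw [heq]
      have hsle : (∑ j ∈ Finset.range (N + 1),
          ∫ s in (0:ℝ)..T, (Set.Icc (b j) (c j)).indicator (fun _ => (1:ℝ)) s)
          ≤ (N + 1) * t₀ := by
        calc _ ≤ ∑ _j ∈ Finset.range (N + 1), t₀ :=
              Finset.sum_le_sum fun j _ => hindval j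
          _ = (N + 1) * t₀ := by
              rw [Finset.sum_const, Finset.card_range]; push_cast; ring
      have := mul_le_mul_of_nonneg_left hsle hMpos.le
      linarith
    -- assemble: g T ≤ g 0 + ε T + M t₀ ((T - b0)/d + 1)
    have hgT : g T ≤ g 0 + (ε * T + M * t₀ * ((T - b 0) / d + 1)) := by
      have h1 : g T - g 0 ≤ ε * T + M * ((N + 1) * t₀) := by
        rw [hftc]; exact le_trans hmono hFval
      have h2 : M * (((N:ℝ) + 1) * t₀) ≤ M * t₀ * ((T - b 0) / d + 1) := by
        have : ((N:ℝ) + 1) * t₀ ≤ ((T - b 0) / d + 1) * t₀ := by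
          apply mul_le_mul_of_nonneg_right _ ht₀.le
          linarith
        nlinarith
      linarith
    -- final arithmetic
    have hnum : Real.log (y T) ≤ g 0 + (ε * T + M * t₀ * ((T - b 0) / d + 1)) :=
      le_trans (hlogy T) hgT
    have hdiv : Real.log (y T) / (2 * T) ≤
        (g 0 + (ε * T + M * t₀ * ((T - b 0) / d + 1))) / (2 * T) :=
      by
        have h2T : (0:ℝ) < 2 * T := by linarith
        exact (div_le_div_iff_of_pos_right h2T).2 hnum
    refine le_trans hdiv (le_of_eq ?_)
    rw [hA, hR, hM]
    field_simp
    ring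
  -- tendsto of the bounding function
  have hφ : Tendsto (fun T : ℝ => A * T⁻¹ + R) atTop (nhds R) := by
    have h1 : Tendsto (fun T : ℝ => A * T⁻¹) atTop (nhds (A * 0)) :=
      tendsto_inv_atTop_zero.const_mul A
    have := h1.add_const R
    simpa using this
  -- eventual lower bound for coboundedness
  have hGb : ∀ t, |D t| ≤ M * |y t| := fun t => by
    rw [abs_of_nonneg (hy_nonneg t)]; exact hglob t
  have hlow : ∃ l : ℝ, ∀ᶠ T in atTop,
      l ≤ Real.log (ε ^ 2 * Y T ^ 2 + Y' T ^ 2) / (2 * T) := by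
    rcases eq_or_lt_of_le (hy_nonneg 0) with h0 | h0
    · refine ⟨0, eventually_atTop.2 ⟨1, fun T hT => ?_⟩⟩
      show (0:ℝ) ≤ Real.log (y T) / (2 * T)
      have hfw := gronwall_fwd (f := y) (f' := D) (M := M) (T := T)
        (by linarith) hy_deriv hGb
      have hy0 : |y 0| = 0 := by rw [abs_of_nonneg (hy_nonneg 0), ← h0]
      have hyT : y T = 0 := by
        rw [hy0, zero_mul] at hfw
        have := abs_nonneg (y T)
        have := (hy_nonneg T)
        rw [abs_of_nonneg (hy_nonneg T)] at hfw
        linarith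
      rw [hyT, Real.log_zero, zero_div]
    · refine ⟨-(|Real.log (y 0)| + M) / 2, eventually_atTop.2 ⟨1, fun T hT => ?_⟩⟩
      show -(|Real.log (y 0)| + M) / 2 ≤ Real.log (y T) / (2 * T)
      have hbw := gronwall_bwd (f := y) (f' := D) (M := M) (T := T)
        (by linarith) hy_deriv hGb
      rw [abs_of_nonneg (hy_nonneg 0), abs_of_nonneg (hy_nonneg T)] at hbw
      have hexp := Real.exp_pos (M * T)
      have hyT : 0 < y T := by nlinarith
      have hlog : Real.log (y 0) ≤ Real.log (y T) + M * T := by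
        have h1 : Real.log (y 0) ≤ Real.log (y T * Real.exp (M * T)) :=
          Real.log_le_log h0 hbw
        rwa [Real.log_mul (ne_of_gt hyT) (Real.exp_ne_zero _), Real.log_exp] at h1
      rw [div_le_div_iff₀ (by norm_num) (by linarith : (0:ℝ) < 2 * T)]
      have habs1 : -|Real.log (y 0)| ≤ Real.log (y 0) := neg_abs_le _
      have habs2 : 0 ≤ |Real.log (y 0)| := abs_nonneg _
      nlinarith
  obtain ⟨l, hlow⟩ := hlow
  have hmain : limsup (fun t : ℝ =>
      Real.log (ε ^ 2 * Y t ^ 2 + Y' t ^ 2) / (2 * t)) atTop ≤ R := by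
    exact aux_limsup_le (eventually_atTop.2 ⟨max (b 0) 1, keybound⟩) hlow hφ
  refine ⟨hmain, fun hd2 => ?_⟩
  have hRlt : R < ε := by
    rw [hR]
    have h1 : 2 * L ^ 2 * t₀ < d * ε ^ 2 := by
      rw [gt_iff_lt, div_lt_iff₀ (by positivity : (0:ℝ) < ε ^ 2)] at hd2
      linarith
    have h2 : L ^ 2 * t₀ / (d * ε) < ε / 2 := by
      rw [div_lt_div_iff₀ (by positivity) (by norm_num)]
      nlinarith
    linarith
  exact lt_of_le_of_lt hmain hRlt
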